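/- Let n = 4 and let c be a parameter collection. Suppose there exist a sequence t_m → 0⁺ and unit vectors ξ_m ∈ S^3 ⊂ ℝ^4 with rank P(ξ_m, t_m c) ≤ 2 for every m (i.e., all 3×3 minors of the principal symbol vanish at ξ_m), such that ξ_m → a = (0, 0, 0, a_4) with a_4 ≠ 0. Then c_2^{41} c_1^{43} c_3^{42} = c_1^{42} c_3^{41} c_2^{43}. -/

import Mathlib

open Matrix

/-- A parameter collection: `c i k j` denotes `c_i^{kj}`, symmetric in the two
superscripts, with normalizations `c_i^{ii} = 1` and `c_i^{jj} = 0` for `i ≠ j`. -/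
def IsParamColl (n : ℕ) (c : Fin n → Fin n → Fin n → ℝ) : Prop :=
  (∀ i j k : Fin n, j ≠ k → c i k j = c i j k) ∧
  (∀ i : Fin n, c i i i = 1) ∧
  (∀ i j : Fin n, i ≠ j → c i j j = 0)

/-- The principal symbol `P(ξ, c) = Σ_k ξ_k A^k`, where `(A^k)_{ij} = c_i^{kj}`. -/
def pSymb {n : ℕ} (ξ : Fin n → ℝ) (c : Fin n → Fin n → Fin n → ℝ) :
    Matrix (Fin n) (Fin n) ℝ :=
  Matrix.of fun i j => ∑ k, ξ k * c i k j

/-- The scaled parameter collection `t • c` (normalized entries unchanged). -/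
def pScale {n : ℕ} (t : ℝ) (c : Fin n → Fin n → Fin n → ℝ) :
    Fin n → Fin n → Fin n → ℝ :=
  fun i k j => if k = j then c i k j else t * c i k j

/-- Auxiliary: rank of any square-to-rectangular submatrix is at most the rank. -/
lemma aux_rank_submatrix_le (A : Matrix (Fin 4) (Fin 4) ℝ) (f g : Fin 3 → Fin 4) :
    (A.submatrix f g).rank ≤ A.rank := by
  have h : A.submatrix f g =
      (1 : Matrix (Fin 4) (Fin 4) ℝ).submatrix f id * A *
      (1 : Matrix (Fin 4) (Fin 4) ℝ).submatrix id g := by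
    ext i j
    simp [Matrix.mul_apply, Matrix.one_apply, Finset.sum_ite_eq, Finset.sum_ite_eq']
  rw [h]
  exact (Matrix.rank_mul_le_left _ _).trans (Matrix.rank_mul_le_right _ _)

/-- Auxiliary: 3×3 minors of a rank-≤2 matrix vanish. -/
lemma aux_det_zero (A : Matrix (Fin 4) (Fin 4) ℝ) (hA : A.rank ≤ 2) (f g : Fin 3 → Fin 4) :
    (A.submatrix f g).det = 0 := by
  by_contra h
  have h1 := Matrix.rank_of_isUnit (A.submatrix f g)
    ((Matrix.isUnit_iff_isUnit_det _).mpr (Ne.isUnit h))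
  have h2 := (aux_rank_submatrix_le A f g).trans hA
  simp_all

/-- Auxiliary pure algebra: two vanishing 3×3 minors force the Schur-complement
rank-one cyclic identity. -/
lemma aux_alg (T Q q11 b01 b02 b03 b10 b12 b13 b20 b21 b23 b30 b31 b32 : ℝ)
    (hT : T ≠ 0) (hQ : Q ≠ 0)
    (hd1 : (T*b01) * ((T*b12) * Q - (T*b13) * (T*b32)) -
           (T*b02) * (q11 * Q - (T*b13) * (T*b31)) +
           (T*b03) * (q11 * (T*b32) - (T*b12) * (T*b31)) = 0)
    (hd2 : (T*b10) * ((T*b21) * Q - (T*b23) * (T*b31)) -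
           q11 * ((T*b20) * Q - (T*b23) * (T*b30)) +
           (T*b13) * ((T*b20) * (T*b31) - (T*b21) * (T*b30)) = 0) :
    (b01 - T*b03*b31/Q) * (b12 - T*b13*b32/Q) * (b20 - T*b23*b30/Q) =
    (b02 - T*b03*b32/Q) * (b10 - T*b13*b30/Q) * (b21 - T*b23*b31/Q) := by
  have key : (T*(Q*b01 - T*b03*b31)) * (T*(Q*b12 - T*b13*b32)) * (T*(Q*b20 - T*b23*b30)) =
      (T*(Q*b02 - T*b03*b32)) * (T*(Q*b10 - T*b13*b30)) * (T*(Q*b21 - T*b23*b31)) := by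
    linear_combination (T*Q*(Q*b20 - T*b23*b30)) * hd1 - (T*Q*(Q*b02 - T*b03*b32)) * hd2
  have e : ∀ u v w : ℝ, T*(Q*u - T*v*w) = (T*Q) * (u - T*v*w/Q) := by
    intro u v w; field_simp
  rw [e, e, e, e, e, e] at key
  have h6 : (T*Q)^3 ≠ 0 := pow_ne_zero _ (mul_ne_zero hT hQ)
  apply mul_left_cancel₀ h6
  calc (T*Q)^3 * ((b01 - T*b03*b31/Q) * (b12 - T*b13*b32/Q) * (b20 - T*b23*b30/Q))
      = (T*Q) * (b01 - T*b03*b31/Q) * ((T*Q) * (b12 - T*b13*b32/Q)) *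
        ((T*Q) * (b20 - T*b23*b30/Q)) := by ring
    _ = (T*Q) * (b02 - T*b03*b32/Q) * ((T*Q) * (b10 - T*b13*b30/Q)) *
        ((T*Q) * (b21 - T*b23*b31/Q)) := by rw [← mul_assoc, ← mul_assoc] at key ⊢; exact key
    _ = (T*Q)^3 * ((b02 - T*b03*b32/Q) * (b10 - T*b13*b30/Q) * (b21 - T*b23*b31/Q)) := by ring

/-- The "off-diagonal superscript" part `B(x)_{ij} = ∑_{k ≠ j} x_k c_i^{kj}`. -/
def Bf (c : Fin 4 → Fin 4 → Fin 4 → ℝ) (x : Fin 4 → ℝ) (i j : Fin 4) : ℝ :=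
  ∑ k, if k = j then 0 else x k * c i k j

lemma aux_entry (c : Fin 4 → Fin 4 → Fin 4 → ℝ) (x : Fin 4 → ℝ) (T : ℝ) (i j : Fin 4) :
    pSymb x (pScale T c) i j = x j * c i j j + T * Bf c x i j := by
  have h1 : x j * c i j j = ∑ k : Fin 4, if k = j then x k * c i k j else 0 := by
    rw [Finset.sum_ite_eq' Finset.univ j (fun k => x k * c i k j)]; simp
  simp only [pSymb, pScale, Bf, Matrix.of_apply]
  rw [h1, Finset.mul_sum, ← Finset.sum_add_distrib]
  refine Finset.sum_congr rfl fun k _ => ?_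
  by_cases h : k = j
  · simp [h]
  · simp [h]; ring

/-- The key per-`m` scalar sequence (a Schur complement entry, rescaled by `1/t`). -/
noncomputable def sFun (c : Fin 4 → Fin 4 → Fin 4 → ℝ) (t : ℕ → ℝ) (ξ : ℕ → Fin 4 → ℝ)
    (i j : Fin 4) (m : ℕ) : ℝ :=
  Bf c (ξ m) i j -
    t m * Bf c (ξ m) i 3 * Bf c (ξ m) 3 j / (pSymb (ξ m) (pScale (t m) c) 3 3)

/-- The indices 1,2,3,4 of the paper correspond to `0,1,2,3 : Fin 4`.  The
conclusion `c_2^{41} c_1^{43} c_3^{42} = c_1^{42} c_3^{41} c_2^{43}` reads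
`c 1 3 0 * c 0 3 2 * c 2 3 1 = c 0 3 1 * c 2 3 0 * c 1 3 2`. -/
theorem stmt15 (c : Fin 4 → Fin 4 → Fin 4 → ℝ) (hc : IsParamColl 4 c)
    (t : ℕ → ℝ) (ht0 : ∀ m, 0 < t m)
    (htlim : Filter.Tendsto t Filter.atTop (nhds 0))
    (ξ : ℕ → Fin 4 → ℝ) (hξunit : ∀ m, ∑ k, (ξ m k) ^ 2 = 1)
    (hrank : ∀ m, (pSymb (ξ m) (pScale (t m) c)).rank ≤ 2)
    (a : Fin 4 → ℝ) (ha0 : a 0 = 0) (ha1 : a 1 = 0) (ha2 : a 2 = 0) (ha3 : a 3 ≠ 0)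
    (hlim : Filter.Tendsto ξ Filter.atTop (nhds a)) :
    c 1 3 0 * c 0 3 2 * c 2 3 1 = c 0 3 1 * c 2 3 0 * c 1 3 2 := by
  obtain ⟨hsym, hdiag1, hdiag0⟩ := hc
  -- componentwise convergence
  have hx : ∀ k, Filter.Tendsto (fun m => ξ m k) Filter.atTop (nhds (a k)) :=
    fun k => (tendsto_pi_nhds.mp hlim) k
  -- convergence of the B entries
  have hB : ∀ i j, Filter.Tendsto (fun m => Bf c (ξ m) i j) Filter.atTop
      (nhds (Bf c a i j)) := by
    intro i j
    unfold Bf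
    apply tendsto_finset_sum
    intro k _
    by_cases h : k = j
    · simp only [if_pos h]; exact tendsto_const_nhds
    · simp only [if_neg h]; exact (hx k).mul tendsto_const_nhds
  -- the (3,3) entry and its limit
  have hQ33 : ∀ m, pSymb (ξ m) (pScale (t m) c) 3 3 = ξ m 3 + t m * Bf c (ξ m) 3 3 := by
    intro m; rw [aux_entry, hdiag1 3, mul_one]
  have hQt : Filter.Tendsto (fun m => pSymb (ξ m) (pScale (t m) c) 3 3)
      Filter.atTop (nhds (a 3)) := by
    have h := (hx 3).add (htlim.mul (hB 3 3))
    rw [show a 3 + 0 * Bf c a 3 3 = a 3 by ring] at h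
    exact h.congr fun m => (hQ33 m).symm
  have hQne : ∀ᶠ m in Filter.atTop, pSymb (ξ m) (pScale (t m) c) 3 3 ≠ 0 :=
    hQt.eventually_ne ha3
  -- limits of the s-sequences
  have hs : ∀ i j : Fin 4, Filter.Tendsto (sFun c t ξ i j) Filter.atTop
      (nhds (Bf c a i j)) := by
    intro i j
    have h := (hB i j).sub ((((htlim.mul (hB i 3)).mul (hB 3 j)).div hQt ha3))
    simp at h; exact h
  -- values of limit B entries
  have hBa : ∀ i j : Fin 4, j ≠ 3 → Bf c a i j = a 3 * c i 3 j := by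
    intro i j hj
    have h3 : (3 : Fin 4) ≠ j := fun h => hj h.symm
    unfold Bf
    rw [Fin.sum_univ_four]
    simp [ha0, ha1, ha2, h3]
  -- the per-m identity, eventually
  have hkey : ∀ᶠ m in Filter.atTop,
      sFun c t ξ 0 1 m * sFun c t ξ 1 2 m * sFun c t ξ 2 0 m =
      sFun c t ξ 0 2 m * sFun c t ξ 1 0 m * sFun c t ξ 2 1 m := by
    filter_upwards [hQne] with m hQm
    set A := pSymb (ξ m) (pScale (t m) c) with hA
    have hoff : ∀ i j : Fin 4, i ≠ j → A i j = t m * Bf c (ξ m) i j := by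
      intro i j hij
      rw [hA, aux_entry, hdiag0 i j hij, mul_zero, zero_add]
    have h1 := aux_det_zero A (hrank m) ![0,1,3] ![1,2,3]
    rw [Matrix.det_fin_three] at h1
    simp only [Matrix.submatrix_apply, Matrix.cons_val_zero, Matrix.cons_val_one,
      Matrix.head_cons, Matrix.cons_val_two, Matrix.tail_cons] at h1
    have h2 := aux_det_zero A (hrank m) ![1,2,3] ![0,1,3]
    rw [Matrix.det_fin_three] at h2
    simp only [Matrix.submatrix_apply, Matrix.cons_val_zero, Matrix.cons_val_one,
      Matrix.head_cons, Matrix.cons_val_two, Matrix.tail_cons] at h2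
    rw [hoff 0 1 (by decide), hoff 0 2 (by decide), hoff 0 3 (by decide),
      hoff 1 2 (by decide), hoff 1 3 (by decide), hoff 3 1 (by decide),
      hoff 3 2 (by decide)] at h1
    rw [hoff 1 0 (by decide), hoff 1 3 (by decide), hoff 2 0 (by decide),
      hoff 2 1 (by decide), hoff 2 3 (by decide), hoff 3 0 (by decide),
      hoff 3 1 (by decide)] at h2
    have hd1 : (t m * Bf c (ξ m) 0 1) * ((t m * Bf c (ξ m) 1 2) * A 3 3 -
          (t m * Bf c (ξ m) 1 3) * (t m * Bf c (ξ m) 3 2)) -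
        (t m * Bf c (ξ m) 0 2) * (A 1 1 * A 3 3 -
          (t m * Bf c (ξ m) 1 3) * (t m * Bf c (ξ m) 3 1)) +
        (t m * Bf c (ξ m) 0 3) * (A 1 1 * (t m * Bf c (ξ m) 3 2) -
          (t m * Bf c (ξ m) 1 2) * (t m * Bf c (ξ m) 3 1)) = 0 := by
      linear_combination h1
    have hd2 : (t m * Bf c (ξ m) 1 0) * ((t m * Bf c (ξ m) 2 1) * A 3 3 -
          (t m * Bf c (ξ m) 2 3) * (t m * Bf c (ξ m) 3 1)) -
        A 1 1 * ((t m * Bf c (ξ m) 2 0) * A 3 3 -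
          (t m * Bf c (ξ m) 2 3) * (t m * Bf c (ξ m) 3 0)) +
        (t m * Bf c (ξ m) 1 3) * ((t m * Bf c (ξ m) 2 0) * (t m * Bf c (ξ m) 3 1) -
          (t m * Bf c (ξ m) 2 1) * (t m * Bf c (ξ m) 3 0)) = 0 := by
      linear_combination h2
    have := aux_alg (t m) (A 3 3) (A 1 1)
      (Bf c (ξ m) 0 1) (Bf c (ξ m) 0 2) (Bf c (ξ m) 0 3)
      (Bf c (ξ m) 1 0) (Bf c (ξ m) 1 2) (Bf c (ξ m) 1 3)
      (Bf c (ξ m) 2 0) (Bf c (ξ m) 2 1) (Bf c (ξ m) 2 3)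
      (Bf c (ξ m) 3 0) (Bf c (ξ m) 3 1) (Bf c (ξ m) 3 2)
      (ne_of_gt (ht0 m)) hQm hd1 hd2
    simpa [sFun, ← hA, mul_assoc] using this
  -- pass to the limit
  have hF : Filter.Tendsto (fun m =>
      sFun c t ξ 0 1 m * sFun c t ξ 1 2 m * sFun c t ξ 2 0 m -
      sFun c t ξ 0 2 m * sFun c t ξ 1 0 m * sFun c t ξ 2 1 m) Filter.atTop
      (nhds ((a 3 * c 0 3 1) * (a 3 * c 1 3 2) * (a 3 * c 2 3 0) -
        (a 3 * c 0 3 2) * (a 3 * c 1 3 0) * (a 3 * c 2 3 1))) := by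
    have h := (((hs 0 1).mul (hs 1 2)).mul (hs 2 0)).sub
      (((hs 0 2).mul (hs 1 0)).mul (hs 2 1))
    rwa [hBa 0 1 (by decide), hBa 1 2 (by decide), hBa 2 0 (by decide),
      hBa 0 2 (by decide), hBa 1 0 (by decide), hBa 2 1 (by decide)] at h
  have hF0 : Filter.Tendsto (fun m =>
      sFun c t ξ 0 1 m * sFun c t ξ 1 2 m * sFun c t ξ 2 0 m -
      sFun c t ξ 0 2 m * sFun c t ξ 1 0 m * sFun c t ξ 2 1 m) Filter.atTop
      (nhds 0) := by
    apply Filter.Tendsto.congr' _ (tendsto_const_nhds (x := (0:ℝ)))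
    filter_upwards [hkey] with m h
    rw [h, sub_self]
  have hL : (a 3 * c 0 3 1) * (a 3 * c 1 3 2) * (a 3 * c 2 3 0) -
      (a 3 * c 0 3 2) * (a 3 * c 1 3 0) * (a 3 * c 2 3 1) = 0 :=
    tendsto_nhds_unique hF hF0
  have hfin : a 3 ^ 3 * (c 1 3 0 * c 0 3 2 * c 2 3 1) =
      a 3 ^ 3 * (c 0 3 1 * c 2 3 0 * c 1 3 2) := by
    linear_combination -hL
  exact mul_left_cancel₀ (pow_ne_zero 3 ha3) hfin
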